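/- With Λ = [0,1], Lebesgue measure, N = 2 and P(x_1,x_2) := 3|x_1 − x_2|, P is a symmetric probability density with P > 0 a.e. and P_{(1)}(x) = 3(x² − x + 1/2), but there is no x_2 ∈ [0,1] and constant γ > 0 such that P(x_1, x_2) ≥ γ P_{(1)}(x_1) for a.e. x_1 ∈ [0,1]. -/

import Mathlib

open MeasureTheory

/-- The density of Example 4: `P(x₁,x₂) = 3|x₁ − x₂|` on `[0,1]²`. -/
noncomputable def exampleDensity (a b : ℝ) : ℝ := 3 * |a - b|

lemma ex_reduction (x : ℝ) (hx : x ∈ Set.Icc (0:ℝ) 1) :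
    (∫ y in Set.Icc (0 : ℝ) 1, exampleDensity x y) = 3 * (x ^ 2 - x + 1 / 2) := by
  obtain ⟨h0, h1⟩ := hx
  have h : (∫ y in Set.Icc (0 : ℝ) 1, exampleDensity x y)
      = ∫ y in (0:ℝ)..1, exampleDensity x y := by
    rw [intervalIntegral.integral_of_le (by norm_num), integral_Icc_eq_integral_Ioc]
  rw [h, ← intervalIntegral.integral_add_adjacent_intervals
      (a := 0) (b := x) (c := 1)
      (f := fun y => exampleDensity x y) ?_ ?_]
  · have key : ∀ a b : ℝ, (∫ y in a..b, 3 * y) = 3 * (b ^ 2 - a ^ 2) / 2 := by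
      intro a b
      rw [intervalIntegral.integral_const_mul, integral_id]
      ring
    have e1 : (∫ y in (0:ℝ)..x, exampleDensity x y) = ∫ y in (0:ℝ)..x, 3 * (x - y) := by
      apply intervalIntegral.integral_congr
      intro y hy
      rw [Set.uIcc_of_le h0] at hy
      simp only [exampleDensity, abs_of_nonneg (by linarith [hy.2] : (0:ℝ) ≤ x - y)]
    have e2 : (∫ y in x..(1:ℝ), exampleDensity x y) = ∫ y in x..(1:ℝ), 3 * (y - x) := by
      apply intervalIntegral.integral_congr
      intro y hy
      rw [Set.uIcc_of_le h1] at hy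
      have : x - y ≤ 0 := by linarith [hy.1]
      simp only [exampleDensity, abs_of_nonpos this]
      ring
    rw [e1, e2]
    have i1 : (∫ y in (0:ℝ)..x, 3 * (x - y)) = 3 * x ^ 2 / 2 := by
      simp only [mul_sub]
      rw [intervalIntegral.integral_sub (g := fun y => 3 * y) intervalIntegrable_const
        ((continuous_const.mul continuous_id').intervalIntegrable _ _)]
      simp [key]
      ring
    have i2 : (∫ y in x..(1:ℝ), 3 * (y - x)) = 3 * (1 - x) ^ 2 / 2 := by
      simp only [mul_sub]
      rw [intervalIntegral.integral_sub (f := fun y => 3 * y)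
        ((continuous_const.mul continuous_id').intervalIntegrable _ _)
        intervalIntegrable_const]
      simp [key]
      ring
    rw [i1, i2]; ring
  · apply Continuous.intervalIntegrable; unfold exampleDensity; fun_prop
  · apply Continuous.intervalIntegrable; unfold exampleDensity; fun_prop

lemma ex_cont : Continuous (fun p : ℝ × ℝ => exampleDensity p.1 p.2) := by
  unfold exampleDensity; fun_prop

lemma ex_int_one
    (hred : ∀ x ∈ Set.Icc (0 : ℝ) 1,
      (∫ y in Set.Icc (0 : ℝ) 1, exampleDensity x y) = 3 * (x ^ 2 - x + 1 / 2)) :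
    (∫ p : ℝ × ℝ in Set.Icc 0 1 ×ˢ Set.Icc 0 1, exampleDensity p.1 p.2) = 1 := by
  have hint : IntegrableOn (fun p : ℝ × ℝ => exampleDensity p.1 p.2)
      (Set.Icc 0 1 ×ˢ Set.Icc 0 1) volume :=
    ex_cont.continuousOn.integrableOn_compact (isCompact_Icc.prod isCompact_Icc)
  rw [show (volume : Measure (ℝ × ℝ)) = (volume : Measure ℝ).prod volume from
    (Measure.volume_eq_prod ℝ ℝ)] at hint ⊢
  rw [setIntegral_prod _ hint]
  rw [setIntegral_congr_fun measurableSet_Icc (fun x hx => hred x hx)]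
  rw [integral_Icc_eq_integral_Ioc, ← intervalIntegral.integral_of_le (by norm_num : (0:ℝ) ≤ 1)]
  have : (∫ x in (0:ℝ)..1, 3 * (x ^ 2 - x + 1 / 2)) = 1 := by
    rw [intervalIntegral.integral_const_mul,
      intervalIntegral.integral_add (f := fun x => x ^ 2 - x)
        (((continuous_pow 2).sub continuous_id').intervalIntegrable _ _)
        intervalIntegrable_const,
      intervalIntegral.integral_sub
        ((continuous_pow 2).intervalIntegrable _ _)
        (continuous_id'.intervalIntegrable _ _),
      integral_pow, integral_id, intervalIntegral.integral_const]
    norm_num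
  exact this

lemma diag_null : (volume : Measure (ℝ × ℝ)) {p : ℝ × ℝ | p.1 = p.2} = 0 := by
  have hm : MeasurableSet {p : ℝ × ℝ | p.1 = p.2} :=
    measurableSet_eq_fun measurable_fst measurable_snd
  rw [show (volume : Measure (ℝ × ℝ)) = (volume : Measure ℝ).prod volume from
    (Measure.volume_eq_prod ℝ ℝ), Measure.prod_apply hm]
  have : ∀ x : ℝ, (volume : Measure ℝ) (Prod.mk x ⁻¹' {p : ℝ × ℝ | p.1 = p.2}) = 0 := by
    intro x
    have : Prod.mk x ⁻¹' {p : ℝ × ℝ | p.1 = p.2} = {x} := by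
      ext y; simp [eq_comm]
    rw [this]; exact measure_singleton x
  simp [this]

lemma ex_pos :
    ∀ᵐ p : ℝ × ℝ ∂(volume.restrict (Set.Icc 0 1 ×ˢ Set.Icc 0 1)),
      0 < exampleDensity p.1 p.2 := by
  rw [ae_iff]
  have hsub : {p : ℝ × ℝ | ¬ 0 < exampleDensity p.1 p.2} ⊆ {p : ℝ × ℝ | p.1 = p.2} := by
    intro p hp
    simp only [Set.mem_setOf_eq, not_lt] at hp ⊢
    unfold exampleDensity at hp
    have := abs_nonneg (p.1 - p.2)
    have : |p.1 - p.2| = 0 := by linarith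
    have := abs_eq_zero.mp this
    linarith
  exact le_antisymm
    ((Measure.restrict_apply_le _ _).trans (measure_mono_null hsub diag_null).le) zero_le

lemma ex_no27 :
    ¬ ∃ x₂ ∈ Set.Icc (0 : ℝ) 1, ∃ γ : ℝ, 0 < γ ∧
      ∀ᵐ x₁ ∂(volume.restrict (Set.Icc (0 : ℝ) 1)),
        γ * (3 * (x₁ ^ 2 - x₁ + 1 / 2)) ≤ exampleDensity x₁ x₂ := by
  rintro ⟨x₂, ⟨h0, h1⟩, γ, hγ, hae⟩
  set δ : ℝ := γ / 4 with hδ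
  have hδpos : 0 < δ := by positivity
  set a : ℝ := max 0 (x₂ - δ) with ha
  set b : ℝ := min 1 (x₂ + δ) with hb
  have hab : a < b := by
    rw [ha, hb]
    rw [max_lt_iff, lt_min_iff, lt_min_iff]
    constructor
    · constructor <;> nlinarith
    · constructor <;> nlinarith
  have hsub : Set.Ioo a b ⊆ {x : ℝ | ¬ γ * (3 * (x ^ 2 - x + 1 / 2)) ≤ exampleDensity x x₂} := by
    intro x hx
    have hxa : x₂ - δ < x := lt_of_le_of_lt (le_max_right _ _) hx.1
    have hxb : x < x₂ + δ := lt_of_lt_of_le hx.2 (min_le_right _ _)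
    simp only [Set.mem_setOf_eq, not_le]
    have habs : |x - x₂| < δ := abs_lt.mpr ⟨by linarith, by linarith⟩
    have hquart : (1:ℝ)/4 ≤ x ^ 2 - x + 1 / 2 := by nlinarith [sq_nonneg (x - 1/2)]
    have : exampleDensity x x₂ < 3 * δ := by
      unfold exampleDensity; linarith
    calc exampleDensity x x₂ < 3 * δ := this
      _ = γ * (3 * (1/4)) := by rw [hδ]; ring
      _ ≤ γ * (3 * (x ^ 2 - x + 1 / 2)) := by
          apply mul_le_mul_of_nonneg_left _ hγ.le
          linarith
  have hIcc : Set.Ioo a b ⊆ Set.Icc (0:ℝ) 1 := by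
    intro x hx
    constructor
    · exact le_trans (le_max_left _ _) hx.1.le
    · exact le_trans hx.2.le (min_le_left _ _)
  rw [ae_iff] at hae
  have hzero : volume (Set.Ioo a b) = 0 := by
    have h1' : (volume.restrict (Set.Icc (0:ℝ) 1)) (Set.Ioo a b) ≤ 0 :=
      hae ▸ measure_mono hsub
    rwa [Measure.restrict_apply measurableSet_Ioo,
      Set.inter_eq_self_of_subset_left hIcc, nonpos_iff_eq_zero] at h1'
  rw [Real.volume_Ioo] at hzero
  exact absurd hzero (by simp [sub_pos.mpr hab]; linarith)

/-- Example 4: `P(x₁,x₂) = 3|x₁−x₂|` is a symmetric probability density on `[0,1]²`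
with `P > 0` a.e. and one-variable reduction `P₍₁₎(x) = 3(x² − x + 1/2)`, yet there is
no `x₂ ∈ [0,1]` and constant `γ > 0` with `P(x₁,x₂) ≥ γ P₍₁₎(x₁)` for a.e. `x₁ ∈ [0,1]`:
condition (27) fails. -/
theorem exampleDensity_no_condition27 :
    (∀ a b : ℝ, exampleDensity a b = exampleDensity b a) ∧
    (∫ p : ℝ × ℝ in Set.Icc 0 1 ×ˢ Set.Icc 0 1, exampleDensity p.1 p.2) = 1 ∧
    (∀ᵐ p : ℝ × ℝ ∂(volume.restrict (Set.Icc 0 1 ×ˢ Set.Icc 0 1)),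
      0 < exampleDensity p.1 p.2) ∧
    (∀ x ∈ Set.Icc (0 : ℝ) 1,
      (∫ y in Set.Icc (0 : ℝ) 1, exampleDensity x y) = 3 * (x ^ 2 - x + 1 / 2)) ∧
    ¬ ∃ x₂ ∈ Set.Icc (0 : ℝ) 1, ∃ γ : ℝ, 0 < γ ∧
      ∀ᵐ x₁ ∂(volume.restrict (Set.Icc (0 : ℝ) 1)),
        γ * (3 * (x₁ ^ 2 - x₁ + 1 / 2)) ≤ exampleDensity x₁ x₂ := by
  refine ⟨fun a b => by unfold exampleDensity; rw [abs_sub_comm],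
    ex_int_one ex_reduction, ex_pos, ex_reduction, ex_no27⟩
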